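/- Let Δ be a facet complex, A the intersection of all facets of Δ, and Δ' = { F \ A : F ∈ Δ }. Then Δ' is a facet complex, and Δ is a cycle if and only if Δ' is a cycle. -/
import Mathlib


variable {V : Type*} [DecidableEq V]

/-- A facet complex: no facet contains another. -/
def IsFacetComplex (Δ : Finset (Finset V)) : Prop :=
  ∀ F ∈ Δ, ∀ G ∈ Δ, F ⊆ G → F = G

/-- `F` is a leaf of `Δ`. -/
def IsLeaf (Δ : Finset (Finset V)) (F : Finset V) : Prop :=
  F ∈ Δ ∧ (Δ = {F} ∨ ∃ G ∈ Δ.erase F, ∀ H ∈ Δ.erase F, H ∩ F ⊆ G ∩ F)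

/-- `Δ` is a forest: every nonempty subset has a leaf. -/
def IsForest (Δ : Finset (Finset V)) : Prop :=
  ∀ Γ ⊆ Δ, Γ.Nonempty → ∃ F, IsLeaf Γ F

/-- `Δ` is connected: any two facets are joined by a path of consecutively
intersecting facets. -/
def FCConnected (Δ : Finset (Finset V)) : Prop :=
  ∀ F ∈ Δ, ∀ G ∈ Δ,
    Relation.ReflTransGen (fun A B => A ∈ Δ ∧ B ∈ Δ ∧ (A ∩ B).Nonempty) F G

/-- A (simplicial) tree is a connected forest. -/
def IsTree (Δ : Finset (Finset V)) : Prop := FCConnected Δ ∧ IsForest Δ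

/-- A cycle: a nonempty facet complex with no leaf, every nonempty proper
subset of which has a leaf. -/
def IsCycle (Δ : Finset (Finset V)) : Prop :=
  Δ.Nonempty ∧ (¬ ∃ F, IsLeaf Δ F) ∧ ∀ Γ ⊂ Δ, Γ.Nonempty → ∃ F, IsLeaf Γ F

/-- Strong neighbors in `Δ`. -/
def StrongNeighbor (Δ : Finset (Finset V)) (F G : Finset V) : Prop :=
  F ∈ Δ ∧ G ∈ Δ ∧ F ≠ G ∧ ∀ H ∈ Δ, F ∩ G ⊆ H → H = F ∨ H = G

namespace CycleAux

variable {V : Type*} [DecidableEq V]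

lemma sdiff_sub_iff {A F G : Finset V} (hF : A ⊆ F) (hG : A ⊆ G) :
    F \ A ⊆ G \ A ↔ F ⊆ G := by
  constructor
  · intro h x hx
    by_cases hxA : x ∈ A
    · exact hG hxA
    · exact (Finset.mem_sdiff.mp (h (Finset.mem_sdiff.mpr ⟨hx, hxA⟩))).1
  · intro h
    exact Finset.sdiff_subset_sdiff h (le_refl A)

lemma sdiff_inj {A F G : Finset V} (hF : A ⊆ F) (hG : A ⊆ G)
    (h : F \ A = G \ A) : F = G :=
  Finset.Subset.antisymm ((sdiff_sub_iff hF hG).mp h.le)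
    ((sdiff_sub_iff hG hF).mp h.ge)

lemma inter_sdiff_eq (A F G : Finset V) :
    (F \ A) ∩ (G \ A) = (F ∩ G) \ A := by
  ext x
  simp only [Finset.mem_inter, Finset.mem_sdiff]
  tauto

lemma image_erase {A : Finset V} {Γ : Finset (Finset V)}
    (hA : ∀ F ∈ Γ, A ⊆ F) {F : Finset V} (hF : F ∈ Γ) :
    (Γ.image (fun F => F \ A)).erase (F \ A) = (Γ.erase F).image (fun F => F \ A) := by
  ext x
  simp only [Finset.mem_erase, Finset.mem_image]
  constructor
  · rintro ⟨hne, G, hG, rfl⟩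
    exact ⟨G, ⟨fun h => hne (by rw [h]), hG⟩, rfl⟩
  · rintro ⟨G, ⟨hGF, hG⟩, rfl⟩
    exact ⟨fun h => hGF (sdiff_inj (hA G hG) (hA F hF) h), G, hG, rfl⟩

lemma leaf_iff {A : Finset V} {Γ : Finset (Finset V)}
    (hA : ∀ F ∈ Γ, A ⊆ F) {F : Finset V} (hF : F ∈ Γ) :
    IsLeaf Γ F ↔ IsLeaf (Γ.image (fun F => F \ A)) (F \ A) := by
  have key : ∀ G ∈ Γ.erase F, ∀ H ∈ Γ.erase F,
      ((H \ A) ∩ (F \ A) ⊆ (G \ A) ∩ (F \ A) ↔ H ∩ F ⊆ G ∩ F) := by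
    intro G hG H hH
    rw [inter_sdiff_eq, inter_sdiff_eq]
    exact sdiff_sub_iff
      (Finset.subset_inter (hA H (Finset.mem_of_mem_erase hH)) (hA F hF))
      (Finset.subset_inter (hA G (Finset.mem_of_mem_erase hG)) (hA F hF))
  constructor
  · rintro ⟨-, h | ⟨G, hG, hGmax⟩⟩
    · refine ⟨Finset.mem_image_of_mem _ hF, Or.inl ?_⟩
      rw [h]; simp
    · refine ⟨Finset.mem_image_of_mem _ hF, Or.inr ?_⟩
      rw [image_erase hA hF]
      refine ⟨G \ A, Finset.mem_image_of_mem _ hG, ?_⟩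
      intro H' hH'
      obtain ⟨H, hH, rfl⟩ := Finset.mem_image.mp hH'
      exact (key G hG H hH).mpr (hGmax H hH)
  · rintro ⟨-, h | hex⟩
    · refine ⟨hF, Or.inl ?_⟩
      ext G
      simp only [Finset.mem_singleton]
      constructor
      · intro hG
        have hm : G \ A ∈ Γ.image (fun F => F \ A) := Finset.mem_image_of_mem _ hG
        rw [h, Finset.mem_singleton] at hm
        exact sdiff_inj (hA G hG) (hA F hF) hm
      · rintro rfl; exact hF
    · rw [image_erase hA hF] at hex
      obtain ⟨G', hG', hmax⟩ := hex
      obtain ⟨G, hG, rfl⟩ := Finset.mem_image.mp hG'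
      refine ⟨hF, Or.inr ⟨G, hG, fun H hH => ?_⟩⟩
      exact (key G hG H hH).mp (hmax (H \ A) (Finset.mem_image_of_mem _ hH))

end CycleAux

theorem cycle_iff_cone_base_cycle (Δ : Finset (Finset V))
    (hΔ : IsFacetComplex Δ)
    (A : Finset V) (hA : A = (Δ.sup id).filter (fun v => ∀ F ∈ Δ, v ∈ F)) :
    IsFacetComplex (Δ.image (fun F => F \ A)) ∧
      (IsCycle Δ ↔ IsCycle (Δ.image (fun F => F \ A))) := by
  have hAΔ : ∀ F ∈ Δ, A ⊆ F := by
    intro F hF x hx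
    rw [hA, Finset.mem_filter] at hx
    exact hx.2 F hF
  have hfc : IsFacetComplex (Δ.image (fun F => F \ A)) := by
    intro F' hF' G' hG' hsub
    obtain ⟨F, hF, rfl⟩ := Finset.mem_image.mp hF'
    obtain ⟨G, hG, rfl⟩ := Finset.mem_image.mp hG'
    rw [CycleAux.sdiff_sub_iff (hAΔ F hF) (hAΔ G hG)] at hsub
    rw [hΔ F hF G hG hsub]
  refine ⟨hfc, ?_⟩
  constructor
  · rintro ⟨hne, hnl, hsub⟩
    refine ⟨hne.image _, ?_, ?_⟩
    · rintro ⟨F', hF'⟩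
      obtain ⟨F, hF, rfl⟩ := Finset.mem_image.mp hF'.1
      exact hnl ⟨F, (CycleAux.leaf_iff hAΔ hF).mpr hF'⟩
    · intro Γ' hΓ' hΓ'ne
      set Γ := Δ.filter (fun F => F \ A ∈ Γ') with hΓdef
      have hΓsub : Γ ⊆ Δ := Finset.filter_subset _ _
      have hAΓ : ∀ F ∈ Γ, A ⊆ F := fun F hF => hAΔ F (hΓsub hF)
      have himg : Γ.image (fun F => F \ A) = Γ' := by
        apply Finset.Subset.antisymm
        · intro x hx
          obtain ⟨F, hF, rfl⟩ := Finset.mem_image.mp hx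
          exact (Finset.mem_filter.mp hF).2
        · intro x hx
          obtain ⟨F, hF, rfl⟩ := Finset.mem_image.mp (hΓ'.subset hx)
          exact Finset.mem_image_of_mem _ (Finset.mem_filter.mpr ⟨hF, hx⟩)
      have hΓne : Γ.Nonempty := by
        obtain ⟨x, hx⟩ := hΓ'ne
        rw [← himg] at hx
        obtain ⟨F, hF, -⟩ := Finset.mem_image.mp hx
        exact ⟨F, hF⟩
      have hΓssub : Γ ⊂ Δ := by
        refine Finset.ssubset_iff_subset_ne.mpr ⟨hΓsub, ?_⟩
        intro h
        rw [h] at himg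
        exact hΓ'.ne himg.symm
      obtain ⟨F, hF⟩ := hsub Γ hΓssub hΓne
      exact ⟨F \ A, himg ▸ (CycleAux.leaf_iff hAΓ hF.1).mp hF⟩
  · rintro ⟨hne, hnl, hsub⟩
    have hΔne : Δ.Nonempty := by
      obtain ⟨x, hx⟩ := hne
      obtain ⟨F, hF, -⟩ := Finset.mem_image.mp hx
      exact ⟨F, hF⟩
    refine ⟨hΔne, ?_, ?_⟩
    · rintro ⟨F, hF⟩
      exact hnl ⟨F \ A, (CycleAux.leaf_iff hAΔ hF.1).mp hF⟩
    · intro Γ hΓ hΓne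
      have hΓsub := hΓ.subset
      have hAΓ : ∀ F ∈ Γ, A ⊆ F := fun F hF => hAΔ F (hΓsub hF)
      have himgss : Γ.image (fun F => F \ A) ⊂ Δ.image (fun F => F \ A) := by
        refine Finset.ssubset_iff_subset_ne.mpr ⟨Finset.image_subset_image hΓsub, ?_⟩
        obtain ⟨F, hFΔ, hFΓ⟩ := Finset.exists_of_ssubset hΓ
        intro h
        have hm : F \ A ∈ Γ.image (fun F => F \ A) := by
          rw [h]; exact Finset.mem_image_of_mem _ hFΔ
        obtain ⟨G, hG, hGe⟩ := Finset.mem_image.mp hm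
        exact hFΓ ((CycleAux.sdiff_inj (hAΔ G (hΓsub hG)) (hAΔ F hFΔ) hGe) ▸ hG)
      obtain ⟨F', hF'⟩ := hsub _ himgss (hΓne.image _)
      obtain ⟨F, hF, rfl⟩ := Finset.mem_image.mp hF'.1
      exact ⟨F, (CycleAux.leaf_iff hAΓ hF).mpr hF'⟩
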